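/- Let B = [[B₁,B₃],[B₂,B₄]] be an (n+m)×(n+m) skew-symmetrizable integer matrix with B₂ ∈ M_{m×n}(ℤ_{≥0}), and suppose (k_1,…,k_s), k_i ∈ {1,…,n}, is a maximal green sequence of B₁. Then after applying μ_{k_s}⋯μ_{k_1} to [B; I_{n+m}], the resulting matrix has block form in which: the lower-left m×n block B₂' of the principal part is entrywise ≤ 0, the corresponding upper-right n×m block B₃' is entrywise ≥ 0, and the C-matrix part equals diag(C₁, I_m) with C₁ ∈ M_{n×n}(ℤ_{≤0}). -/

import Mathlib

variable {ι : Type} [Fintype ι] [DecidableEq ι]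

/-- Mutation in direction `k` of a `2N × N` integer matrix, rows indexed by
`ι ⊕ ι` (the principal part is the `Sum.inl` block). -/
def mutate (k : ι) (B : Matrix (ι ⊕ ι) ι ℤ) : Matrix (ι ⊕ ι) ι ℤ :=
  fun i j =>
    if i = Sum.inl k ∨ j = k then -B i j
    else B i j + Int.sign (B i k) * max (B i k * B (Sum.inl k) j) 0

/-- Apply a sequence of mutations `μ_{k_s} ⋯ μ_{k_1}` (the list is `[k_1, …, k_s]`). -/
def mutateSeq (L : List ι) (B : Matrix (ι ⊕ ι) ι ℤ) : Matrix (ι ⊕ ι) ι ℤ :=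
  L.foldl (fun M k => mutate k M) B

/-- The C-matrix of `B` along the mutation sequence `L`: the lower block of
the mutation of `[B; I]`. -/
def Cmat (B : Matrix ι ι ℤ) (L : List ι) : Matrix ι ι ℤ :=
  fun i j => mutateSeq L (Matrix.fromRows B 1) (Sum.inr i) j

/-- A column index `j` is green in the C-matrix along `L` if its column is entrywise `≥ 0`. -/
def IsGreen (B : Matrix ι ι ℤ) (L : List ι) (j : ι) : Prop :=
  ∀ i, 0 ≤ Cmat B L i j

/-- `L` is a green sequence: each mutation occurs at a green index of the current C-matrix. -/
def IsGreenSeq (B : Matrix ι ι ℤ) (L : List ι) : Prop :=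
  ∀ (t : ℕ) (h : t < L.length), IsGreen B (L.take t) (L.get ⟨t, h⟩)

/-- `L` is a green-to-red sequence: the final C-matrix is entrywise `≤ 0`. -/
def IsGreenToRed (B : Matrix ι ι ℤ) (L : List ι) : Prop :=
  ∀ i j, Cmat B L i j ≤ 0

/-- `L` is a maximal green sequence of `B`. -/
def IsMGS (B : Matrix ι ι ℤ) (L : List ι) : Prop :=
  IsGreenSeq B L ∧ IsGreenToRed B L

/-! ### Auxiliary lemmas -/

private lemma sign_mul_max_of_nonneg' (c y : ℤ) (hc : 0 ≤ c) :
    c.sign * max (c * y) 0 = c * max y 0 := by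
  rcases hc.lt_or_eq with h | h
  · rw [Int.sign_eq_one_of_pos h, one_mul, mul_max_of_nonneg _ _ h.le, mul_zero]
  · simp [← h]

private lemma sign_mul_max_eq_zero' (c y : ℤ) (hc : 0 ≤ c) (hy : y ≤ 0) :
    c.sign * max (c * y) 0 = 0 := by
  rw [max_eq_right (mul_nonpos_of_nonneg_of_nonpos hc hy), mul_zero]

lemma mutateSeq_concat (L : List ι) (k : ι) (B : Matrix (ι ⊕ ι) ι ℤ) :
    mutateSeq (L ++ [k]) B = mutate k (mutateSeq L B) := by
  simp [mutateSeq, List.foldl_append]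

/-- Mutation preserves skew-symmetrizability of the principal (upper) part. -/
lemma mutate_skew (S : ι → ℤ) (hS : ∀ i, 0 < S i) (M : Matrix (ι ⊕ ι) ι ℤ)
    (h : ∀ p q, S p * M (Sum.inl p) q = -(S q * M (Sum.inl q) p)) (k : ι) :
    ∀ p q, S p * mutate k M (Sum.inl p) q = -(S q * mutate k M (Sum.inl q) p) := by
  intro p q
  by_cases hp : p = k
  · simp only [mutate]
    rw [if_pos (Or.inl (by rw [hp])), if_pos (Or.inr hp)]
    linarith [h p q]
  · by_cases hq : q = k
    · simp only [mutate]
      rw [if_pos (Or.inr hq), if_pos (Or.inl (by rw [hq]))]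
      linarith [h p q]
    · have hpk := h p k
      have hqk := h q k
      have hpq := h p q
      simp only [mutate]
      rw [if_neg (by simp [hp, hq]), if_neg (by simp [hp, hq])]
      set x := M (Sum.inl p) k with hxdef
      set y := M (Sum.inl k) q with hydef
      set x' := M (Sum.inl q) k with hx'def
      set y' := M (Sum.inl k) p with hy'def
      have key : S p * (x * y) = S q * (x' * y') := by
        linear_combination y * hpk - y' * hqk
      suffices hsuf : S p * (x.sign * max (x * y) 0)
          = -(S q * (x'.sign * max (x' * y') 0)) by
        linear_combination hpq + hsuf
      rcases lt_trichotomy (x * y) 0 with hxy | hxy | hxy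
      · have h2 : S q * (x' * y') < 0 := by
          rw [← key]; exact mul_neg_of_pos_of_neg (hS p) hxy
        have h1 : x' * y' < 0 := by nlinarith [hS q]
        rw [max_eq_right hxy.le, max_eq_right h1.le]; ring
      · have h2 : S q * (x' * y') = 0 := by rw [← key, hxy, mul_zero]
        have h1 : x' * y' = 0 := by
          rcases mul_eq_zero.mp h2 with h | h
          · exact absurd h (hS q).ne'
          · exact h
        rw [hxy, h1]; simp
      · have h2 : 0 < S q * (x' * y') := by
          rw [← key]; exact mul_pos (hS p) hxy
        have h1 : 0 < x' * y' := by nlinarith [hS q]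
        rcases lt_trichotomy x 0 with hx | hx | hx
        · have hy : y < 0 := by nlinarith
          have hx' : 0 < x' := by nlinarith [hS q, hS k, mul_pos (hS k) (neg_pos.mpr hy)]
          rw [Int.sign_eq_neg_one_of_neg hx, Int.sign_eq_one_of_pos hx',
            max_eq_left hxy.le, max_eq_left h1.le]
          linear_combination -key
        · exfalso; rw [hx, zero_mul] at hxy; exact lt_irrefl 0 hxy
        · have hy : 0 < y := by nlinarith
          have hx' : x' < 0 := by nlinarith [hS q, mul_pos (hS k) hy]
          rw [Int.sign_eq_one_of_pos hx, Int.sign_eq_neg_one_of_neg hx',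
            max_eq_left hxy.le, max_eq_left h1.le]
          linear_combination key

/-- The invariant linking the big mutated matrix to the small one. -/
def LinkedInv {n m : ℕ} (B : Matrix (Fin n ⊕ Fin m) (Fin n ⊕ Fin m) ℤ)
    (S : Fin n ⊕ Fin m → ℤ)
    (M : Matrix ((Fin n ⊕ Fin m) ⊕ (Fin n ⊕ Fin m)) (Fin n ⊕ Fin m) ℤ)
    (sM : Matrix (Fin n ⊕ Fin n) (Fin n) ℤ) : Prop :=
  (∀ a b, M (Sum.inl (Sum.inl a)) (Sum.inl b) = sM (Sum.inl a) b) ∧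
  (∀ i j, M (Sum.inr (Sum.inl i)) (Sum.inl j) = sM (Sum.inr i) j) ∧
  (∀ i j, M (Sum.inr (Sum.inl i)) (Sum.inr j) = 0) ∧
  (∀ i j, M (Sum.inr (Sum.inr i)) (Sum.inl j) = 0) ∧
  (∀ (i j : Fin m), M (Sum.inr (Sum.inr i)) (Sum.inr j) = if i = j then 1 else 0) ∧
  (∀ i j, M (Sum.inl (Sum.inr i)) (Sum.inl j) = ∑ l, B (Sum.inr i) (Sum.inl l) * sM (Sum.inr l) j) ∧
  (∀ p q, S p * M (Sum.inl p) q = -(S q * M (Sum.inl q) p))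

lemma LinkedInv.base {n m : ℕ} (B : Matrix (Fin n ⊕ Fin m) (Fin n ⊕ Fin m) ℤ)
    (S : Fin n ⊕ Fin m → ℤ) (hskew : ∀ i j, S i * B i j = -(S j * B j i)) :
    LinkedInv B S (Matrix.fromRows B 1)
      (Matrix.fromRows (fun i j => B (Sum.inl i) (Sum.inl j)) 1) := by
  refine ⟨?_, ?_, ?_, ?_, ?_, ?_, ?_⟩
  · intro a b; simp [Matrix.fromRows_apply_inl, Matrix.fromRows_apply_inr]; rfl
  · intro i j; simp [Matrix.fromRows_apply_inl, Matrix.fromRows_apply_inr, Matrix.one_apply]; rfl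
  · intro i j; simp [Matrix.fromRows_apply_inl, Matrix.fromRows_apply_inr, Matrix.one_apply]
  · intro i j; simp [Matrix.fromRows_apply_inl, Matrix.fromRows_apply_inr, Matrix.one_apply]
  · intro i j; simp [Matrix.fromRows_apply_inl, Matrix.fromRows_apply_inr, Matrix.one_apply]
  · intro i j
    simp [Matrix.fromRows_apply_inl, Matrix.fromRows_apply_inr, Matrix.one_apply, mul_ite, mul_one, mul_zero]
    simp [show ∀ l, Matrix.fromRows (fun i j => B (Sum.inl i) (Sum.inl j)) (1 : Matrix (Fin n) (Fin n) ℤ) (Sum.inr l) j = (1 : Matrix (Fin n) (Fin n) ℤ) l j from fun _ => rfl, Matrix.one_apply]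
  · intro p q; simp [Matrix.fromRows]; exact hskew p q

lemma LinkedInv.step {n m : ℕ} {B : Matrix (Fin n ⊕ Fin m) (Fin n ⊕ Fin m) ℤ}
    {S : Fin n ⊕ Fin m → ℤ}
    {M : Matrix ((Fin n ⊕ Fin m) ⊕ (Fin n ⊕ Fin m)) (Fin n ⊕ Fin m) ℤ}
    {sM : Matrix (Fin n ⊕ Fin n) (Fin n) ℤ}
    (hS : ∀ i, 0 < S i)
    (hB₂ : ∀ (i : Fin m) (j : Fin n), 0 ≤ B (Sum.inr i) (Sum.inl j))
    (h : LinkedInv B S M sM) (k : Fin n)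
    (hgreen : ∀ i, 0 ≤ sM (Sum.inr i) k) :
    LinkedInv B S (mutate (Sum.inl k) M) (mutate k sM) := by
  obtain ⟨h1, h2, h3, h4, h5, h6, h7⟩ := h
  have hr : ∀ i : Fin m, 0 ≤ M (Sum.inl (Sum.inr i)) (Sum.inl k) := by
    intro i; rw [h6]
    exact Finset.sum_nonneg fun l _ => mul_nonneg (hB₂ i l) (hgreen l)
  have hb3 : ∀ j : Fin m, M (Sum.inl (Sum.inl k)) (Sum.inr j) ≤ 0 := by
    intro j
    have h7' := h7 (Sum.inl k) (Sum.inr j)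
    nlinarith [hS (Sum.inl k), hS (Sum.inr j), hr j]
  refine ⟨?_, ?_, ?_, ?_, ?_, ?_, mutate_skew S hS M h7 (Sum.inl k)⟩
  · -- (1) principal n×n block matches small principal block
    intro a b
    simp only [mutate]
    by_cases hc : a = k ∨ b = k
    · rw [if_pos (by simpa using hc), if_pos (by simpa using hc), h1]
    · rw [if_neg (by simpa using hc), if_neg (by simpa using hc), h1, h1, h1]
  · -- (2) C₁ block matches small C-matrix
    intro i j
    simp only [mutate]
    by_cases hj : j = k
    · rw [if_pos (by simp [hj]), if_pos (Or.inr hj), h2]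
    · rw [if_neg (by simp [hj]), if_neg (by simp [hj]), h2, h2, h1]
  · -- (3) upper-right C block stays zero
    intro i j
    simp only [mutate]
    rw [if_neg (by simp), h3, h2,
      sign_mul_max_eq_zero' _ _ (hgreen i) (hb3 j), add_zero]
  · -- (4) lower-left identity block stays zero
    intro i j
    simp only [mutate]
    by_cases hj : j = k
    · rw [if_pos (by simp [hj]), h4, neg_zero]
    · rw [if_neg (by simp [hj]), h4, h4]; simp
  · -- (5) lower-right identity block stays the identity
    intro i j
    simp only [mutate]
    rw [if_neg (by simp), h5, h4]; simp
  · -- (6) B₂ block stays a (fixed) nonneg combination of small C-rows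
    intro i j
    simp only [mutate]
    by_cases hj : j = k
    · subst hj
      rw [if_pos (by simp), h6, ← Finset.sum_neg_distrib]
      refine Finset.sum_congr rfl fun l _ => ?_
      rw [if_pos (by simp)]
      ring
    · rw [if_neg (by simp [hj])]
      have hs : 0 ≤ ∑ l, B (Sum.inr i) (Sum.inl l) * sM (Sum.inr l) k :=
        Finset.sum_nonneg fun l _ => mul_nonneg (hB₂ i l) (hgreen l)
      rw [h6 i j, h6 i k, h1 k j, sign_mul_max_of_nonneg' _ _ hs, Finset.sum_mul,
        ← Finset.sum_add_distrib]
      refine Finset.sum_congr rfl fun l _ => ?_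
      rw [if_neg (by simp [hj]), sign_mul_max_of_nonneg' _ _ (hgreen l)]
      ring

/-- After running a maximal green sequence of the top-left block `B₁` on `[B; I]`
(with nonnegative bottom-left block `B₂`), the mutated matrix has the block shape
`[[B₁', B₃'], [B₂', B₄'], [C₁, 0], [0, I]]` with `B₂' ≤ 0`, `B₃' ≥ 0` and `C₁ ≤ 0`. -/
theorem block_shape_after_mgs {n m : ℕ}
    (B : Matrix (Fin n ⊕ Fin m) (Fin n ⊕ Fin m) ℤ)
    (S : Fin n ⊕ Fin m → ℤ) (hS : ∀ i, 0 < S i)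
    (hskew : ∀ i j, S i * B i j = -(S j * B j i))
    (hB₂ : ∀ (i : Fin m) (j : Fin n), 0 ≤ B (Sum.inr i) (Sum.inl j))
    (ks : List (Fin n))
    (hks : IsMGS (fun i j => B (Sum.inl i) (Sum.inl j)) ks) :
    letI M := mutateSeq (ks.map Sum.inl) (Matrix.fromRows B 1)
    (∀ (i : Fin m) (j : Fin n), M (Sum.inl (Sum.inr i)) (Sum.inl j) ≤ 0) ∧
    (∀ (i : Fin n) (j : Fin m), 0 ≤ M (Sum.inl (Sum.inl i)) (Sum.inr j)) ∧
    (∀ (i j : Fin n), M (Sum.inr (Sum.inl i)) (Sum.inl j) ≤ 0) ∧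
    (∀ (i : Fin n) (j : Fin m), M (Sum.inr (Sum.inl i)) (Sum.inr j) = 0) ∧
    (∀ (i : Fin m) (j : Fin n), M (Sum.inr (Sum.inr i)) (Sum.inl j) = 0) ∧
    (∀ (i j : Fin m), M (Sum.inr (Sum.inr i)) (Sum.inr j) = if i = j then 1 else 0) := by
  have key : ∀ t, t ≤ ks.length →
      LinkedInv B S (mutateSeq ((ks.take t).map Sum.inl) (Matrix.fromRows B 1))
        (mutateSeq (ks.take t) (Matrix.fromRows (fun i j => B (Sum.inl i) (Sum.inl j)) 1)) := by
    intro t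
    induction t with
    | zero =>
      intro _
      exact LinkedInv.base B S hskew
    | succ t ih =>
      intro h
      have ht : t < ks.length := h
      have htake : ks.take (t + 1) = ks.take t ++ [ks.get ⟨t, ht⟩] := by
        rw [List.take_succ, List.getElem?_eq_getElem ht]; rfl
      have hgreen : ∀ i, 0 ≤ mutateSeq (ks.take t)
          (Matrix.fromRows (fun i j => B (Sum.inl i) (Sum.inl j)) 1) (Sum.inr i)
          (ks.get ⟨t, ht⟩) := hks.1 t ht
      simp only [htake, List.map_append, List.map_cons, List.map_nil, mutateSeq_concat]
      exact LinkedInv.step hS hB₂ (ih (Nat.le_of_succ_le h)) _ hgreen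
  have fin := key ks.length le_rfl
  rw [List.take_length] at fin
  obtain ⟨h1, h2, h3, h4, h5, h6, h7⟩ := fin
  have hC : ∀ i j, mutateSeq ks
      (Matrix.fromRows (fun i j => B (Sum.inl i) (Sum.inl j)) 1) (Sum.inr i) j ≤ 0 :=
    hks.2
  have g1 : ∀ (i : Fin m) (j : Fin n),
      mutateSeq (ks.map Sum.inl) (Matrix.fromRows B 1) (Sum.inl (Sum.inr i)) (Sum.inl j) ≤ 0 := by
    intro i j
    rw [h6]
    exact Finset.sum_nonpos fun l _ => mul_nonpos_of_nonneg_of_nonpos (hB₂ i l) (hC l j)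
  refine ⟨g1, ?_, ?_, h3, h4, h5⟩
  · intro i j
    have h7' := h7 (Sum.inl i) (Sum.inr j)
    nlinarith [hS (Sum.inl i), hS (Sum.inr j), g1 j i]
  · intro i j
    rw [h2]
    exact hC i j
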